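/- Let p be a prime with p ≡ 2 (mod 3) (and p odd). Then Σ_{k=0}^{(p+1)/3} (6k−1) (−1/3)_k^3 / k!^3 ≡ p · Σ_{k=0}^{(p+1)/3} (−1/3)_k^2 / (k! (1/3)_k) (mod p^3). -/

import Mathlib

open Finset

/-- The Pochhammer symbol `(a)_k = a(a+1)⋯(a+k-1)` for rational `a`. -/
def poch (a : ℚ) (k : ℕ) : ℚ := ∏ j ∈ Finset.range k, (a + j)

lemma poch_succ (a : ℚ) (n : ℕ) : poch a (n + 1) = poch a n * (a + n) :=
  Finset.prod_range_succ _ _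

lemma poch_zero (a : ℚ) : poch a 0 = 1 := rfl

lemma poch_third_ne_zero (k : ℕ) : poch (1/3) k ≠ 0 := by
  apply Finset.prod_ne_zero_iff.2
  intro j _
  positivity

lemma sum1 (n : ℕ) :
    ∑ k ∈ Finset.range (n + 1),
      (6 * (k : ℚ) - 1) * poch (-1/3) k ^ 3 / ((k.factorial : ℚ)) ^ 3
      = (3 * (n : ℚ) + 1) * (3 * (n : ℚ) - 1) ^ 3 * poch (-1/3) n ^ 3
        / ((n.factorial : ℚ)) ^ 3 := by
  induction n with
  | zero => simp [poch_zero]; norm_num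
  | succ n ih =>
      rw [Finset.sum_range_succ, ih, poch_succ, Nat.factorial_succ]
      have h1 : ((n.factorial : ℚ)) ≠ 0 := by positivity
      have h2 : ((n : ℚ) + 1) ≠ 0 := by positivity
      push_cast
      field_simp
      ring

lemma sum2 (n : ℕ) :
    ∑ k ∈ Finset.range (n + 1),
      poch (-1/3) k ^ 2 / ((k.factorial : ℚ) * poch (1/3) k)
      = (3 * (n : ℚ) - 1) ^ 2 * poch (-1/3) n ^ 2
        / ((n.factorial : ℚ) * poch (1/3) n) := by
  induction n with
  | zero => simp [poch_zero]
  | succ n ih =>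
      rw [Finset.sum_range_succ, ih, poch_succ (-1/3), poch_succ (1/3),
        Nat.factorial_succ]
      have h1 : ((n.factorial : ℚ)) ≠ 0 := by positivity
      have h2 : ((n : ℚ) + 1) ≠ 0 := by positivity
      have h3 : poch (1/3) n ≠ 0 := poch_third_ne_zero n
      have h4 : (1/3 : ℚ) + n ≠ 0 := by positivity
      push_cast
      field_simp
      ring

lemma norm_nat_eq_one (p : ℕ) [Fact p.Prime] (k : ℕ) (hk : ¬ p ∣ k) :
    ‖((k : ℕ) : ℚ_[p])‖ = 1 := by
  apply le_antisymm
  · exact_mod_cast Padic.norm_int_le_one (k : ℤ)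
  · by_contra h
    push_neg at h
    have : ‖((k : ℤ) : ℚ_[p])‖ < 1 := by exact_mod_cast h
    rw [Padic.norm_intCast_lt_one_iff] at this
    exact hk (by exact_mod_cast this)

theorem stmt11 (p : ℕ) [Fact p.Prime] (hodd : Odd p) (hp3 : p % 3 = 2) :
    ‖(((∑ k ∈ Finset.range ((p + 1) / 3 + 1),
          (6 * (k : ℚ) - 1) * poch (-1/3) k ^ 3 / ((k.factorial : ℚ)) ^ 3) -
        ((p : ℚ) *
          ∑ k ∈ Finset.range ((p + 1) / 3 + 1),
            poch (-1/3) k ^ 2 / ((k.factorial : ℚ) * poch (1/3) k)) : ℚ) : ℚ_[p])‖ ≤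
      (p : ℝ) ^ (-3 : ℤ) := by
  have hp := (Fact.out : p.Prime)
  set n := (p + 1) / 3 with hn
  have h3n : 3 * n = p + 1 := by omega
  have hplt : n < p := by
    have := hp.two_le
    omega
  have hpq : (p : ℚ) = 3 * (n : ℚ) - 1 := by
    have : ((3 * n : ℕ) : ℚ) = ((p + 1 : ℕ) : ℚ) := by rw [h3n]
    push_cast at this
    linarith
  -- p doesn't divide 3
  have hp3' : ¬ p ∣ 3 := by
    intro h
    have := (Nat.prime_dvd_prime_iff_eq hp (by norm_num)).1 h
    omega
  -- abbreviations
  set P : ℚ := poch (-1/3) n with hP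
  set R : ℚ := poch (1/3) n with hR
  have hNfac : ((n.factorial : ℚ)) ≠ 0 := by positivity
  have hRne : R ≠ 0 := poch_third_ne_zero n
  -- rewrite via closed forms: difference = p^3 * r
  have key : (∑ k ∈ Finset.range (n + 1),
          (6 * (k : ℚ) - 1) * poch (-1/3) k ^ 3 / ((k.factorial : ℚ)) ^ 3) -
        ((p : ℚ) * ∑ k ∈ Finset.range (n + 1),
            poch (-1/3) k ^ 2 / ((k.factorial : ℚ) * poch (1/3) k))
      = (p : ℚ) ^ 3 * (((p : ℚ) + 2) * P ^ 3 / ((n.factorial : ℚ)) ^ 3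
          - P ^ 2 / ((n.factorial : ℚ) * R)) := by
    rw [sum1, sum2, hpq]
    rw [← hP, ← hR]
    field_simp
    ring
  rw [key]
  -- norm computation
  have hcast : (((p : ℚ) ^ 3 * (((p : ℚ) + 2) * P ^ 3 / ((n.factorial : ℚ)) ^ 3
          - P ^ 2 / ((n.factorial : ℚ) * R)) : ℚ) : ℚ_[p])
      = (p : ℚ_[p]) ^ 3 * ((((p : ℚ_[p]) + 2) * ((P : ℚ) : ℚ_[p]) ^ 3
          / (((n.factorial : ℚ) : ℚ_[p])) ^ 3
          - ((P : ℚ) : ℚ_[p]) ^ 2 / (((n.factorial : ℚ) : ℚ_[p]) * ((R : ℚ) : ℚ_[p])))) := by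
    push_cast
    ring
  rw [hcast, norm_mul, norm_pow, Padic.norm_p]
  -- now bound the second factor by 1
  have h3norm : ‖((3 : ℕ) : ℚ_[p])‖ = 1 := norm_nat_eq_one p 3 hp3'
  have hfacnorm : ‖(((n.factorial : ℕ) : ℚ) : ℚ_[p])‖ = 1 := by
    rw [show (((n.factorial : ℕ) : ℚ) : ℚ_[p]) = ((n.factorial : ℕ) : ℚ_[p]) by push_cast; ring]
    exact norm_nat_eq_one p _ (by
      rw [hp.dvd_factorial]
      omega)
  have hPnorm : ‖((P : ℚ) : ℚ_[p])‖ ≤ 1 := by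
    have : ((P : ℚ) : ℚ_[p]) = ∏ j ∈ Finset.range n, ((-1/3 : ℚ_[p]) + j) := by
      rw [hP]; unfold poch; push_cast; ring
    rw [this, norm_prod]
    apply Finset.prod_le_one
    · intro i _; positivity
    · intro i _
      refine le_trans (Padic.nonarchimedean _ _) ?_
      apply max_le
      · have : ‖(-1/3 : ℚ_[p])‖ = 1 := by
          rw [show (-1/3 : ℚ_[p]) = -(((3:ℕ) : ℚ_[p]))⁻¹ by push_cast; ring,
            norm_neg, norm_inv, h3norm]
          norm_num
        rw [this]
      · exact_mod_cast Padic.norm_int_le_one (i : ℤ)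
  have hRnorm : ‖((R : ℚ) : ℚ_[p])‖ = 1 := by
    have : ((R : ℚ) : ℚ_[p]) = ∏ j ∈ Finset.range n,
        (((1 + 3 * j : ℕ) : ℚ_[p]) / ((3 : ℕ) : ℚ_[p])) := by
      rw [hR]; unfold poch; push_cast
      apply Finset.prod_congr rfl
      intro j _
      ring
    rw [this, norm_prod]
    apply Finset.prod_eq_one
    intro j hj
    rw [Finset.mem_range] at hj
    rw [norm_div, h3norm, norm_nat_eq_one p (1 + 3 * j) (by
      intro h
      have := Nat.le_of_dvd (by omega) h
      omega)]
    norm_num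
  have hbound : ‖(((p : ℚ_[p]) + 2) * ((P : ℚ) : ℚ_[p]) ^ 3
          / (((n.factorial : ℚ) : ℚ_[p])) ^ 3
          - ((P : ℚ) : ℚ_[p]) ^ 2 / (((n.factorial : ℚ) : ℚ_[p]) * ((R : ℚ) : ℚ_[p])))‖ ≤ 1 := by
    have t1 : ‖(((p : ℚ_[p]) + 2) * ((P : ℚ) : ℚ_[p]) ^ 3
          / (((n.factorial : ℚ) : ℚ_[p])) ^ 3)‖ ≤ 1 := by
      rw [norm_div, norm_mul, norm_pow, norm_pow, hfacnorm]
      have hp2 : ‖((p : ℚ_[p]) + 2)‖ ≤ 1 := by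
        have : ((p : ℚ_[p]) + 2) = (((p + 2 : ℕ) : ℤ) : ℚ_[p]) := by push_cast; ring
        rw [this]
        exact Padic.norm_int_le_one _
      calc ‖((p : ℚ_[p]) + 2)‖ * ‖((P : ℚ) : ℚ_[p])‖ ^ 3 / 1 ^ 3
          ≤ 1 * 1 ^ 3 / 1 ^ 3 := by
            gcongr
        _ = 1 := by norm_num
    have t2 : ‖(((P : ℚ) : ℚ_[p]) ^ 2 / (((n.factorial : ℚ) : ℚ_[p]) * ((R : ℚ) : ℚ_[p])))‖ ≤ 1 := by
      rw [norm_div, norm_mul, norm_pow, hfacnorm, hRnorm]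
      calc ‖((P : ℚ) : ℚ_[p])‖ ^ 2 / (1 * 1)
          ≤ 1 ^ 2 / (1 * 1) := by
            gcongr
        _ = 1 := by norm_num
    calc ‖_ - _‖ ≤ max ‖_‖ ‖_‖ := by
          rw [sub_eq_add_neg]
          refine le_trans (Padic.nonarchimedean _ _) ?_
          rw [norm_neg]
      _ ≤ 1 := max_le t1 t2
  calc (p : ℝ)⁻¹ ^ 3 * ‖_‖ ≤ (p : ℝ)⁻¹ ^ 3 * 1 := by
        gcongr
    _ = (p : ℝ) ^ (-3 : ℤ) := by
        rw [mul_one, inv_pow, ← zpow_natCast, ← zpow_neg]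
        norm_num
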